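/- Let c > 0 be small and γ : [0,1] → ℂ² be given by γ(t) = (c·e^{2πit}, c). Then a continuous branch x(t) of (−(c¹⁵ + c⁸e^{14πit}))^{1/5} along γ satisfies x(1) ≠ x(0); hence the loop γ does not lift to a closed loop in the 5-fold covering {x⁵ + z¹⁵ + y⁷z = 0} → ℂ² over the complement of the branch locus, and consequently that covering is connected over a neighborhood of γ. -/

import Mathlib

open Complex Set

lemma no_point (z : ℂ) (h1 : z.re = 3/5) (h2 : ‖z^5 - 1‖ ≤ 1/64) : False := by
  set y := z.im with hy
  have hb0 : (0:ℝ) ≤ ‖z‖ := norm_nonneg z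
  have hb5 : ‖z^5‖ = ‖z‖ ^ 5 := norm_pow z 5
  have hub : ‖z‖ ^ 5 ≤ 65/64 := by
    rw [← hb5]
    calc ‖z^5‖ = ‖(z^5 - 1) + 1‖ := by ring_nf
    _ ≤ ‖z^5 - 1‖ + ‖(1:ℂ)‖ := norm_add_le _ _
    _ ≤ 65/64 := by simp; linarith
  have hlb : 63/64 ≤ ‖z‖ ^ 5 := by
    rw [← hb5]
    have : ‖(1:ℂ)‖ ≤ ‖1 - z^5‖ + ‖z^5‖ := by
      calc ‖(1:ℂ)‖ = ‖(1 - z^5) + z^5‖ := by ring_nf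
      _ ≤ _ := norm_add_le _ _
    rw [norm_sub_rev 1 (z^5)] at this
    simp at this
    linarith
  have hsq : ‖z‖ ^ 2 = 9/25 + y^2 := by
    rw [Complex.sq_norm, Complex.normSq_apply, h1]; ring
  have hy2u : y^2 ≤ 4/5 := by
    nlinarith [sq_nonneg (‖z‖), sq_nonneg (‖z‖ ^ 2 - 1), sq_nonneg (‖z‖ - 1), sq_nonneg (‖z‖ + 1), sq_nonneg (‖z‖ ^2 + 1)]
  have hy2l : 49/100 ≤ y^2 := by
    nlinarith [sq_nonneg (‖z‖), sq_nonneg (‖z‖ ^ 2 - 1), sq_nonneg (‖z‖ - 1), sq_nonneg (‖z‖ + 1), sq_nonneg (‖z‖ ^2 + 1)]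
  have hre : (z^5).re = z.re^5 - 10*z.re^3*z.im^2 + 5*z.re*z.im^4 := by
    have h5 : z^5 = z*z*z*z*z := by ring
    rw [h5]
    simp [Complex.mul_re, Complex.mul_im]
    ring
  have hrege : 1 - 1/64 ≤ (z^5).re := by
    have h := (Complex.abs_re_le_norm (z^5 - 1)).trans h2
    have h' := abs_le.mp h
    simp [Complex.sub_re] at h'
    linarith [h'.1]
  rw [h1, ← hy] at hre
  nlinarith [mul_nonneg (by linarith : (0:ℝ) ≤ y^2 - 49/100) (by linarith : (0:ℝ) ≤ 4/5 - y^2)]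

lemma part1 (c : ℝ) (hc0 : 0 < c) (hc1 : c < 1/2)
    (x : ℝ → ℂ) (hx : ContinuousOn x (Icc 0 1))
    (hx5 : ∀ t ∈ Icc (0:ℝ) 1,
      x t ^ 5 = -((c:ℂ) ^ 15 + (c:ℂ) ^ 8 * Complex.exp (14 * Real.pi * I * t))) :
    x 1 ≠ x 0 := by
  intro heq
  have hpi := Real.pi_pos
  have hconv : ∀ t : ℝ, (14 * (Real.pi:ℂ) * I * t) = ((14*Real.pi*t : ℝ):ℂ) * I := by
    intro t; push_cast; ring
  -- x 0 ≠ 0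
  have hx00 : x 0 ^ 5 = -(((c^15 + c^8 : ℝ)):ℂ) := by
    have h := hx5 0 (by constructor <;> norm_num)
    rw [hconv] at h
    simp at h
    rw [h]; push_cast; ring
  have hcpos : (0:ℝ) < c^15 + c^8 := by positivity
  have hx0ne : x 0 ≠ 0 := by
    intro h0
    rw [h0] at hx00
    have h' : ((c^15+c^8:ℝ):ℂ) = 0 := by linear_combination hx00
    have : (c^15+c^8:ℝ) = 0 := by exact_mod_cast h'
    linarith
  set q : ℝ → ℂ := fun t => x t * Complex.exp (-(((14*Real.pi*t : ℝ):ℂ) * I) / 5) / x 0 with hqdef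
  have hqcont : ContinuousOn q (Icc 0 1) := by
    apply ContinuousOn.div_const
    apply hx.mul
    apply Continuous.continuousOn
    apply Complex.continuous_exp.comp
    fun_prop
  -- q t ^ 5
  have hq5 : ∀ t ∈ Icc (0:ℝ) 1, ‖q t ^ 5 - 1‖ ≤ 1/64 := by
    intro t ht
    have hE : Complex.exp (-(((14*Real.pi*t : ℝ):ℂ) * I) / 5) ^ 5
        = Complex.exp (((-(14*Real.pi*t) : ℝ):ℂ) * I) := by
      rw [← Complex.exp_nat_mul]
      congr 1
      push_cast; ring
    have habsE : ‖Complex.exp (((-(14*Real.pi*t) : ℝ):ℂ) * I)‖ = 1 :=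
      Complex.norm_exp_ofReal_mul_I _
    have hEE : Complex.exp (((14*Real.pi*t : ℝ):ℂ) * I) *
        Complex.exp (((-(14*Real.pi*t) : ℝ):ℂ) * I) = 1 := by
      rw [← Complex.exp_add]
      push_cast
      ring_nf
      exact Complex.exp_zero
    have hxt := hx5 t ht
    rw [hconv] at hxt
    set E' := Complex.exp (((-(14*Real.pi*t) : ℝ):ℂ) * I) with hE'
    have hqeq : q t ^ 5 - 1 = (c:ℂ)^15 * (E' - 1) / (((c^15 + c^8 : ℝ)):ℂ) := by
      have expand : q t ^ 5 = x t ^ 5 * E' / x 0 ^ 5 := by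
        rw [hqdef]
        simp only
        rw [div_pow, mul_pow, hE]
      have hden : (((c^15 + c^8 : ℝ)):ℂ) ≠ 0 := by
        intro h
        have : (c^15 + c^8 : ℝ) = 0 := by exact_mod_cast h
        linarith
      have hx05ne : x 0 ^ 5 ≠ 0 := pow_ne_zero _ hx0ne
      rw [expand, div_sub_one hx05ne, hxt, hx00]
      rw [div_eq_div_iff (by rw [← hx00]; exact hx05ne) hden]
      push_cast at hEE ⊢
      linear_combination (-(c:ℂ)^8 * ((c:ℂ)^15+(c:ℂ)^8)) * hEE
    rw [hqeq]
    rw [norm_div, norm_mul]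
    have h1 : ‖(c:ℂ)^15‖ = c^15 := by
      rw [← Complex.ofReal_pow, Complex.norm_real, Real.norm_eq_abs, abs_of_pos (by positivity)]
    have h2 : ‖(((c^15 + c^8 : ℝ)):ℂ)‖ = c^15 + c^8 := by
      rw [Complex.norm_real, Real.norm_eq_abs, abs_of_pos hcpos]
    have h3 : ‖E' - 1‖ ≤ 2 := by
      calc ‖E' - 1‖ ≤ ‖E'‖ + ‖(1:ℂ)‖ := norm_sub_le _ _
      _ = 2 := by rw [habsE]; simp; norm_num
    rw [h1, h2]
    rw [div_le_iff₀ hcpos]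
    have hc7 : c^7 ≤ (1/2)^7 := by
      apply pow_le_pow_left₀ (le_of_lt hc0) (le_of_lt hc1)
    nlinarith [pow_pos hc0 8, pow_pos hc0 15, mul_le_mul_of_nonneg_left h3 (le_of_lt (pow_pos hc0 15))]
  -- endpoint values
  have hq0 : q 0 = 1 := by
    rw [hqdef]; simp
    exact hx0ne
  have hq1re : (q 1).re < 0 := by
    have : q 1 = Complex.exp (((-(14*Real.pi)/5 : ℝ):ℂ) * I) := by
      rw [hqdef]; simp only
      rw [heq, mul_comm (x 0), mul_div_assoc, div_self hx0ne, mul_one]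
      congr 1
      push_cast; ring
    rw [this, Complex.exp_ofReal_mul_I_re]
    have hcos : Real.cos (-(14*Real.pi)/5) = Real.cos (4*Real.pi/5) := by
      rw [show (-(14*Real.pi)/5 : ℝ) = -(14*Real.pi/5) by ring, Real.cos_neg]
      rw [show (14*Real.pi/5 : ℝ) = 4*Real.pi/5 + 2*Real.pi by ring]
      exact Real.cos_add_two_pi _
    rw [hcos]
    apply Real.cos_neg_of_pi_div_two_lt_of_lt <;> linarith
  -- IVT
  have hfcont : ContinuousOn (fun t => (q t).re) (Icc 0 1) :=
    Complex.continuous_re.comp_continuousOn hqcont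
  have hmem : (3/5 : ℝ) ∈ Icc ((fun t => (q t).re) 1) ((fun t => (q t).re) 0) := by
    simp only [hq0]
    constructor
    · exact le_of_lt (lt_of_lt_of_le hq1re (by norm_num))
    · rw [Complex.one_re]; norm_num
  obtain ⟨t₀, ht₀, hft₀⟩ := intermediate_value_Icc' (by norm_num : (0:ℝ) ≤ 1) hfcont hmem
  exact no_point (q t₀) hft₀ (hq5 t₀ ht₀)

lemma part3 (c : ℝ) (hc0 : 0 < c) (hc1 : c < 1/2) :
    IsConnected {p : ℂ × ℂ × ℂ |
        p.1 ^ 5 + p.2.2 ^ 15 + p.2.1 ^ 7 * p.2.2 = 0 ∧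
        (∃ t ∈ Icc (0:ℝ) 1, p.2.1 = (c:ℂ) * Complex.exp (2 * Real.pi * I * t)) ∧
        p.2.2 = (c:ℂ)} := by
  have hpi := Real.pi_pos
  have hc7 : c ^ 7 < 1 := by
    calc c^7 ≤ (1/2:ℝ)^7 := pow_le_pow_left₀ hc0.le hc1.le 7
    _ < 1 := by norm_num
  set ζ : ℂ := Complex.exp (2 * Real.pi * I / 5) with hζdef
  set u : ℝ → ℂ := fun t => 1 + (c:ℂ)^7 * Complex.exp (-(14 * Real.pi * I * t)) with hudef
  have hconv : ∀ t : ℝ, -(14 * (Real.pi:ℂ) * I * t) = ((-(14*Real.pi*t) : ℝ):ℂ) * I := by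
    intro t; push_cast; ring
  have hure : ∀ t : ℝ, 0 < (u t).re := by
    intro t
    have habs : ‖(c:ℂ)^7 * Complex.exp (-(14 * Real.pi * I * t))‖ = c^7 := by
      rw [hconv, norm_mul, Complex.norm_exp_ofReal_mul_I, mul_one, ← Complex.ofReal_pow,
        Complex.norm_real, Real.norm_eq_abs, abs_of_pos (by positivity)]
    have hre := abs_le.mp (Complex.abs_re_le_norm ((c:ℂ)^7 * Complex.exp (-(14 * Real.pi * I * t))))
    rw [habs] at hre
    simp only [hudef, Complex.add_re, Complex.one_re]
    linarith [hre.1]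
  have hune : ∀ t : ℝ, u t ≠ 0 := by
    intro t h
    have := hure t
    rw [h, Complex.zero_re] at this
    exact lt_irrefl 0 this
  set x₀ : ℝ → ℂ := fun t => ((c ^ ((8:ℝ)/5) : ℝ) : ℂ) * Complex.exp (Real.pi * I / 5) *
      Complex.exp (14 * Real.pi * I * t / 5) * Complex.exp (Complex.log (u t) / 5) with hx₀def
  have hucont : Continuous u := by
    apply continuous_const.add
    apply continuous_const.mul
    apply Complex.continuous_exp.comp
    fun_prop
  have hx₀cont : Continuous x₀ := by
    apply Continuous.mul
    apply Continuous.mul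
    · apply continuous_const.mul
      apply Complex.continuous_exp.comp
      fun_prop
    · apply Complex.continuous_exp.comp
      fun_prop
    · apply Complex.continuous_exp.comp
      apply Continuous.div_const
      exact hucont.clog (fun t => Complex.mem_slitPlane_iff.mpr (Or.inl (hure t)))
  -- exponential identities
  have hEE : ∀ t : ℝ, Complex.exp (14 * Real.pi * I * t) * Complex.exp (-(14 * Real.pi * I * t)) = 1 := by
    intro t; rw [← Complex.exp_add]; simp
  have hr5 : (((c ^ ((8:ℝ)/5) : ℝ) : ℂ))^5 = ((c^8 : ℝ) : ℂ) := by
    have : (c ^ ((8:ℝ)/5))^(5:ℕ) = c^8 := by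
      rw [← Real.rpow_natCast (c ^ ((8:ℝ)/5)) 5, ← Real.rpow_mul hc0.le,
        show ((8:ℝ)/5 * ((5:ℕ):ℝ) : ℝ) = ((8:ℕ):ℝ) by norm_num, Real.rpow_natCast]
    exact_mod_cast congrArg (fun r : ℝ => (r:ℂ)) this
  have hx05 : ∀ t : ℝ, x₀ t ^ 5 = -((c:ℂ)^15 + (c:ℂ)^8 * Complex.exp (14 * Real.pi * I * t)) := by
    intro t
    have e1 : Complex.exp (Real.pi * I / 5) ^ 5 = -1 := by
      rw [← Complex.exp_nat_mul, show (5:ℕ) * ((Real.pi:ℂ) * I / 5) = Real.pi * I by push_cast; ring,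
        Complex.exp_pi_mul_I]
    have e2 : Complex.exp (14 * Real.pi * I * t / 5) ^ 5 = Complex.exp (14 * Real.pi * I * t) := by
      rw [← Complex.exp_nat_mul]; congr 1; push_cast; ring
    have e3 : Complex.exp (Complex.log (u t) / 5) ^ 5 = u t := by
      rw [← Complex.exp_nat_mul, show (5:ℕ) * (Complex.log (u t) / 5) = Complex.log (u t) by push_cast; ring,
        Complex.exp_log (hune t)]
    rw [hx₀def]
    simp only
    rw [mul_pow, mul_pow, mul_pow, hr5, e1, e2, e3, hudef]
    simp only
    push_cast
    linear_combination (-(c:ℂ)^15) * hEE t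
  have hζ5 : ζ^5 = 1 := by
    rw [hζdef, ← Complex.exp_nat_mul, show (5:ℕ) * (2 * (Real.pi:ℂ) * I / 5) = 2 * Real.pi * I by push_cast; ring,
      Complex.exp_two_pi_mul_I]
  have hshift : ∀ (t : ℝ) (m : ℕ), x₀ (t + m) = ζ^(7*m) * x₀ t := by
    intro t m
    have e3 : Complex.exp (14 * Real.pi * I * ((t:ℝ) + m : ℝ) / 5)
        = ζ^(7*m) * Complex.exp (14 * Real.pi * I * t / 5) := by
      rw [hζdef, ← Complex.exp_nat_mul, ← Complex.exp_add]
      congr 1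
      push_cast; ring
    have e4 : u (t + m) = u t := by
      rw [hudef]
      simp only
      congr 1
      congr 1
      rw [show -(14 * (Real.pi:ℂ) * I * ((t:ℝ) + m : ℝ)) = -(14 * Real.pi * I * t) + ((-(7*m):ℤ):ℂ) * (2 * Real.pi * I) by push_cast; ring,
        Complex.exp_add, Complex.exp_int_mul_two_pi_mul_I, mul_one]
    rw [hx₀def]
    simp only
    rw [e3, e4]
    ring
  set F : ℝ → ℂ × ℂ × ℂ := fun t => (x₀ t, (c:ℂ) * Complex.exp (2 * Real.pi * I * t), (c:ℂ)) with hFdef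
  have hFcont : Continuous F := by
    refine continuous_prodMk.mpr ⟨hx₀cont, continuous_prodMk.mpr ⟨?_, continuous_const⟩⟩
    apply continuous_const.mul
    apply Complex.continuous_exp.comp
    fun_prop
  have hyper : ∀ (t : ℝ) (n : ℤ), (c:ℂ) * Complex.exp (2 * Real.pi * I * ((t:ℝ) + n : ℝ))
      = (c:ℂ) * Complex.exp (2 * Real.pi * I * t) := by
    intro t n
    congr 1
    rw [show 2 * (Real.pi:ℂ) * I * ((t:ℝ) + n : ℝ) = 2 * Real.pi * I * t + ((n:ℤ):ℂ) * (2 * Real.pi * I) by push_cast; ring,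
      Complex.exp_add, Complex.exp_int_mul_two_pi_mul_I, mul_one]
  have hpow7 : ∀ t : ℝ, ((c:ℂ) * Complex.exp (2 * Real.pi * I * t))^7 * (c:ℂ)
      = (c:ℂ)^8 * Complex.exp (14 * Real.pi * I * t) := by
    intro t
    rw [mul_pow, ← Complex.exp_nat_mul, show (7:ℕ) * (2 * (Real.pi:ℂ) * I * t) = 14 * Real.pi * I * t by push_cast; ring]
    ring
  have hset : {p : ℂ × ℂ × ℂ |
        p.1 ^ 5 + p.2.2 ^ 15 + p.2.1 ^ 7 * p.2.2 = 0 ∧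
        (∃ t ∈ Icc (0:ℝ) 1, p.2.1 = (c:ℂ) * Complex.exp (2 * Real.pi * I * t)) ∧
        p.2.2 = (c:ℂ)} = Set.range F := by
    ext p
    simp only [Set.mem_setOf_eq, Set.mem_range]
    constructor
    · rintro ⟨h1, ⟨t, ht, hy⟩, hz⟩
      rw [hy, hz] at h1
      have hx0ne : x₀ t ≠ 0 := by
        rw [hx₀def]
        refine mul_ne_zero (mul_ne_zero (mul_ne_zero ?_ (Complex.exp_ne_zero _))
          (Complex.exp_ne_zero _)) (Complex.exp_ne_zero _)
        simpa using (Real.rpow_pos_of_pos hc0 _).ne'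
      have hp15 : p.1 ^ 5 = x₀ t ^ 5 := by
        rw [hx05 t]
        linear_combination h1 - hpow7 t
      have hw5 : (p.1 / x₀ t)^5 = 1 := by
        rw [div_pow, hp15, div_self (pow_ne_zero _ hx0ne)]
      obtain ⟨k, hk5, hkw⟩ := (Complex.isPrimitiveRoot_exp 5 (by norm_num)).eq_pow_of_pow_eq_one hw5
      rw [show ((5:ℕ):ℂ) = (5:ℂ) by norm_num, ← hζdef] at hkw
      have hp1 : p.1 = ζ ^ k * x₀ t := by
        rw [hkw, div_mul_cancel₀ _ hx0ne]
      refine ⟨t + ((3*k : ℕ):ℝ), ?_⟩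
      have h21 : ζ ^ (7*(3*k)) = ζ ^ k := by
        rw [show 7*(3*k) = 5*(4*k) + k by ring, pow_add, pow_mul, hζ5, one_pow, one_mul]
      have hF1 : x₀ (t + ((3*k:ℕ):ℝ)) = p.1 := by rw [hshift t (3*k), h21, ← hp1]
      have hF2 : (c:ℂ) * Complex.exp (2 * Real.pi * I * ((t:ℝ) + ((3*k:ℕ):ℝ) : ℝ)) = p.2.1 := by
        have h' := hyper t ((3*k:ℕ):ℤ)
        push_cast at h' ⊢
        rw [h', hy]
      have hF3 : ((c:ℝ):ℂ) = p.2.2 := hz.symm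
      rw [hFdef]
      exact Prod.ext_iff.mpr ⟨hF1, Prod.ext_iff.mpr ⟨hF2, hF3⟩⟩
    · rintro ⟨t, rfl⟩
      refine ⟨?_, ⟨Int.fract t, ⟨⟨Int.fract_nonneg t, (Int.fract_lt_one t).le⟩, ?_⟩⟩, rfl⟩
      · simp only [hFdef]
        rw [hx05 t, hpow7 t]
        push_cast
        ring
      · simp only [hFdef]
        rw [show (Int.fract t : ℝ) = t + (-⌊t⌋ : ℤ) by rw [Int.fract]; push_cast; ring]
        exact (hyper t (-⌊t⌋)).symm
  rw [hset]
  exact isConnected_range hFcont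

theorem stmt3 :
    ∃ c₀ : ℝ, 0 < c₀ ∧ ∀ c : ℝ, 0 < c → c < c₀ →
      -- a continuous branch of the fifth root along the loop is not closed
      ((∀ x : ℝ → ℂ, ContinuousOn x (Icc 0 1) →
        (∀ t ∈ Icc (0:ℝ) 1,
          x t ^ 5 = -((c:ℂ) ^ 15 + (c:ℂ) ^ 8 * Complex.exp (14 * Real.pi * I * t))) →
        x 1 ≠ x 0) ∧
      -- hence no continuous lift of γ to X is a closed loop
      (∀ g : ℝ → ℂ × ℂ × ℂ, ContinuousOn g (Icc 0 1) →
        (∀ t ∈ Icc (0:ℝ) 1,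
          (g t).1 ^ 5 + (g t).2.2 ^ 15 + (g t).2.1 ^ 7 * (g t).2.2 = 0 ∧
          (g t).2.1 = (c:ℂ) * Complex.exp (2 * Real.pi * I * t) ∧ (g t).2.2 = (c:ℂ)) →
        g 1 ≠ g 0) ∧
      -- consequently the covering restricted over the loop is connected
      IsConnected {p : ℂ × ℂ × ℂ |
        p.1 ^ 5 + p.2.2 ^ 15 + p.2.1 ^ 7 * p.2.2 = 0 ∧
        (∃ t ∈ Icc (0:ℝ) 1, p.2.1 = (c:ℂ) * Complex.exp (2 * Real.pi * I * t)) ∧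
        p.2.2 = (c:ℂ)}) := by
  refine ⟨1/2, by norm_num, fun c hc0 hc1 => ⟨part1 c hc0 hc1, fun g hg hgx => ?_, part3 c hc0 hc1⟩⟩
  intro heq
  refine part1 c hc0 hc1 (fun t => (g t).1) (continuous_fst.comp_continuousOn hg) ?_
    (congrArg Prod.fst heq)
  intro t ht
  obtain ⟨h1, hy, hz⟩ := hgx t ht
  have hpow7 : ((c:ℂ) * Complex.exp (2 * Real.pi * I * t))^7 * (c:ℂ)
      = (c:ℂ)^8 * Complex.exp (14 * Real.pi * I * t) := by
    rw [mul_pow, ← Complex.exp_nat_mul,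
      show (7:ℕ) * (2 * (Real.pi:ℂ) * I * t) = 14 * Real.pi * I * t by push_cast; ring]
    ring
  rw [hy, hz] at h1
  linear_combination h1 - hpow7
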